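/- Let 𝔫 be a Lie subalgebra of gl_N(ℂ) all of whose elements are nilpotent matrices. For X ∈ gl_N(ℂ) and a differentiable function f : ℂ^{N×N} → ℂ define the left-invariant derivative (X^L f)(g) := Df(g)[g·X], the directional derivative of f at the matrix g in the direction of the matrix product g·X. Then for every polynomial function p on ℂ^{N×N} there exists N_p ∈ ℕ such that for every M > N_p and all X_1,…,X_M ∈ 𝔫 one has X_1^L ( X_2^L ( ⋯ (X_M^L p) ⋯ ) ) = 0 identically on ℂ^{N×N}. -/

import Mathlib

/-- The left-invariant derivative `(X^L f)(g) = Df(g)[g·X]` of a function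
`f : ℂ^{N×N} → ℂ` in the direction of the matrix `X` (here `ℂ^{N×N}` is realized
as `Fin N → Fin N → ℂ`, and `g·X` is the matrix product). -/
noncomputable def Lder {N : ℕ} (X : Fin N → Fin N → ℂ)
    (f : (Fin N → Fin N → ℂ) → ℂ) : (Fin N → Fin N → ℂ) → ℂ :=
  fun g => fderiv ℂ f g (Matrix.of.symm (Matrix.of g * Matrix.of X))

/-- Iterated left-invariant derivatives: `LderList [X_1,…,X_M] f = X_1^L(X_2^L(⋯(X_M^L f)⋯))`. -/
noncomputable def LderList {N : ℕ} (l : List (Fin N → Fin N → ℂ))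
    (f : (Fin N → Fin N → ℂ) → ℂ) : (Fin N → Fin N → ℂ) → ℂ :=
  l.foldr Lder f

attribute [local instance 100] LieRing.ofAssociativeRing

/-! ### Auxiliary material -/

open MvPolynomial

namespace Stmt16Aux

variable {N : ℕ}

abbrev PA (N : ℕ) := MvPolynomial (Fin N × Fin N) ℂ

/-- The algebraic incarnation of the left-invariant derivative: the derivation of the
polynomial ring in the matrix entries sending the generic matrix `G` to `G·X`. -/
noncomputable def Dn (X : Matrix (Fin N) (Fin N) ℂ) : Derivation ℂ (PA N) (PA N) :=
  MvPolynomial.mkDerivation ℂ (fun s => ∑ m, MvPolynomial.X (s.1, m) * MvPolynomial.C (X m s.2))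

noncomputable def DnList (l : List (Matrix (Fin N) (Fin N) ℂ)) (p : PA N) : PA N :=
  l.foldr (fun X q => Dn X q) p

@[simp] lemma DnList_nil (p : PA N) : DnList [] p = p := rfl

@[simp] lemma DnList_cons (X : Matrix (Fin N) (Fin N) ℂ) (l) (p : PA N) :
    DnList (X :: l) p = Dn X (DnList l p) := rfl

@[simp] lemma DnList_zero (l : List (Matrix (Fin N) (Fin N) ℂ)) : DnList l (0 : PA N) = 0 := by
  induction l with
  | nil => rfl
  | cons X l ih => simp [ih]

lemma DnList_add (l : List (Matrix (Fin N) (Fin N) ℂ)) (p q : PA N) :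
    DnList l (p + q) = DnList l p + DnList l q := by
  induction l with
  | nil => rfl
  | cons X l ih => simp [ih]

lemma DnList_sum {α : Type*} (l : List (Matrix (Fin N) (Fin N) ℂ)) (s : Finset α) (f : α → PA N) :
    DnList l (∑ a ∈ s, f a) = ∑ a ∈ s, DnList l (f a) := by
  classical
  induction s using Finset.induction with
  | empty => simp
  | insert a s h ih => simp [Finset.sum_insert h, DnList_add, ih]

noncomputable def matC (X : Matrix (Fin N) (Fin N) ℂ) : Matrix (Fin N) (Fin N) (PA N) :=
  X.map MvPolynomial.C

lemma matC_mul (X Y : Matrix (Fin N) (Fin N) ℂ) : matC (X * Y) = matC X * matC Y := by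
  simp [matC, Matrix.map_mul]

/-- The generic matrix whose entries are the variables. -/
noncomputable def Gmat (N : ℕ) : Matrix (Fin N) (Fin N) (PA N) :=
  Matrix.of (fun i j => MvPolynomial.X (i, j))

lemma Dn_X (X : Matrix (Fin N) (Fin N) ℂ) (s : Fin N × Fin N) :
    Dn X (MvPolynomial.X s) = (Gmat N * matC X) s.1 s.2 := by
  rw [Dn, MvPolynomial.mkDerivation_X]
  simp [Gmat, Matrix.mul_apply, matC, Matrix.map_apply]

lemma Dn_GM_entry (X M : Matrix (Fin N) (Fin N) ℂ) (i j : Fin N) :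
    Dn X ((Gmat N * matC M) i j) = (Gmat N * matC (X * M)) i j := by
  rw [Matrix.mul_apply]
  rw [show (Dn X) (∑ m, Gmat N i m * matC M m j) = ∑ m, Dn X (Gmat N i m * matC M m j) from
    map_sum (Dn X).toLinearMap _ _]
  have : ∀ m, Dn X (Gmat N i m * matC M m j)
      = (Gmat N * matC X) i m * matC M m j := by
    intro m
    rw [Derivation.leibniz]
    have hC : Dn X (matC M m j) = 0 := MvPolynomial.derivation_C _ _
    rw [hC]
    have hX : Dn X (Gmat N i m) = (Gmat N * matC X) i m := Dn_X X (i, m)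
    simp [hX, smul_eq_mul, mul_comm]
  rw [Finset.sum_congr rfl (fun m _ => this m)]
  rw [matC_mul, ← Matrix.mul_assoc, Matrix.mul_apply]

lemma DnList_X (l : List (Matrix (Fin N) (Fin N) ℂ)) (s : Fin N × Fin N) :
    DnList l (MvPolynomial.X s) = (Gmat N * matC l.prod) s.1 s.2 := by
  induction l with
  | nil =>
      rw [DnList_nil, List.prod_nil, show matC (1 : Matrix (Fin N) (Fin N) ℂ) = 1 from
        Matrix.map_one _ (map_zero _) (map_one _), mul_one]
      rfl
  | cons X l ih =>
      rw [DnList_cons, ih, Dn_GM_entry, List.prod_cons]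

/-- All two-sided splittings of a list into a pair of complementary subsequences. -/
def splittings {α : Type*} : List α → List (List α × List α)
  | [] => [([], [])]
  | a :: l => (splittings l).flatMap (fun q => [(a :: q.1, q.2), (q.1, a :: q.2)])

lemma splittings_spec {α : Type*} : ∀ (l : List α) (q : List α × List α), q ∈ splittings l →
    (q.1.length + q.2.length = l.length ∧ (∀ a ∈ q.1, a ∈ l) ∧ (∀ a ∈ q.2, a ∈ l)) := by
  intro l
  induction l with
  | nil => intro q hq; simp [splittings] at hq; subst hq; simp
  | cons a l ih =>
      intro q hq
      simp only [splittings, List.mem_flatMap] at hq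
      obtain ⟨r, hr, hq⟩ := hq
      obtain ⟨h1, h2, h3⟩ := ih r hr
      simp only [List.mem_cons, List.mem_singleton] at hq
      rcases hq with rfl | hq
      · refine ⟨by simp [h1, Nat.succ_add], ?_, ?_⟩
        · intro b hb; rcases List.mem_cons.mp hb with rfl | hb
          · exact List.mem_cons_self
          · exact List.mem_cons_of_mem _ (h2 b hb)
        · intro b hb; exact List.mem_cons_of_mem _ (h3 b hb)
      · simp at hq; subst hq
        refine ⟨by simp [h1]; omega, ?_, ?_⟩
        · intro b hb; exact List.mem_cons_of_mem _ (h2 b hb)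
        · intro b hb; rcases List.mem_cons.mp hb with rfl | hb
          · exact List.mem_cons_self
          · exact List.mem_cons_of_mem _ (h3 b hb)

lemma Dn_sum_list (X : Matrix (Fin N) (Fin N) ℂ) (L : List (PA N)) :
    Dn X L.sum = (L.map (Dn X)).sum := by
  induction L with
  | nil => simp
  | cons a L ih => simp [map_add, ih]

lemma sum_map_flatMap_pair {α β γ : Type*} [AddCommMonoid γ] (L : List α) (g : α → List β)
    (f : β → γ) :
    ((L.flatMap g).map f).sum = (L.map (fun a => ((g a).map f).sum)).sum := by
  induction L with
  | nil => simp
  | cons a L ih => simp [List.flatMap_cons, List.map_append, List.sum_append, ih]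

/-- Iterated Leibniz rule. -/
lemma DnList_mul (l : List (Matrix (Fin N) (Fin N) ℂ)) (p q : PA N) :
    DnList l (p * q) = ((splittings l).map (fun r => DnList r.1 p * DnList r.2 q)).sum := by
  induction l generalizing p q with
  | nil => simp [splittings]
  | cons a l ih =>
      rw [DnList_cons, ih, Dn_sum_list]
      rw [List.map_map, splittings, sum_map_flatMap_pair]
      congr 1
      apply List.map_congr_left
      intro r _
      simp only [Function.comp_apply, List.map_cons, List.map_nil, List.sum_cons,
        List.sum_nil, add_zero, DnList_cons, Derivation.leibniz, smul_eq_mul]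
      ring

/-! ### The analytic part -/

noncomputable def Efun (p : PA N) : (Fin N → Fin N → ℂ) → ℂ :=
  fun g => MvPolynomial.eval (fun ij => g ij.1 ij.2) p

noncomputable def coordCLM (s : Fin N × Fin N) : (Fin N → Fin N → ℂ) →L[ℂ] ℂ :=
  (ContinuousLinearMap.proj (R := ℂ) (φ := fun _ : Fin N => ℂ) s.2).comp
    (ContinuousLinearMap.proj (φ := fun _ : Fin N => Fin N → ℂ) s.1)

@[simp] lemma coordCLM_apply (s : Fin N × Fin N) (w : Fin N → Fin N → ℂ) :
    coordCLM s w = w s.1 s.2 := rfl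

noncomputable def dE (p : PA N) (g : Fin N → Fin N → ℂ) : (Fin N → Fin N → ℂ) →L[ℂ] ℂ :=
  ∑ s : Fin N × Fin N, Efun (pderiv s p) g • coordCLM s

lemma deriv_sum_apply (ds : Fin N × Fin N → Derivation ℂ (PA N) (PA N)) (p : PA N) :
    (∑ s : Fin N × Fin N, ds s) p = ∑ s : Fin N × Fin N, ds s p := by
  induction (Finset.univ : Finset (Fin N × Fin N)) using Finset.induction with
  | empty => simp
  | insert h ih => simp_all

lemma Dn_eq_sum_pderiv (X : Matrix (Fin N) (Fin N) ℂ) :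
    Dn X = ∑ s : Fin N × Fin N,
      (∑ m, MvPolynomial.X (s.1, m) * MvPolynomial.C (X m s.2)) •
        (pderiv s : Derivation ℂ (PA N) (PA N)) := by
  apply MvPolynomial.derivation_ext
  intro i
  rw [Dn, MvPolynomial.mkDerivation_X, deriv_sum_apply]
  rw [Finset.sum_eq_single i]
  · simp
  · intro b _ hb
    simp [Derivation.smul_apply, pderiv_X, Finsupp.single_apply, Pi.single_apply, hb]
  · simp

lemma hasFDerivAt_Efun (p : PA N) (g : Fin N → Fin N → ℂ) :
    HasFDerivAt (Efun p) (dE p g) g := by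
  induction p using MvPolynomial.induction_on with
  | C a =>
      have h1 : Efun (N := N) (C a) = fun _ => a := by
        funext g; simp [Efun]
      have h2 : dE (N := N) (C a) g = 0 := by
        ext w
        simp [dE, pderiv_C, Efun]
      rw [h1, h2]
      exact hasFDerivAt_const a g
  | add p q hp hq =>
      have h1 : Efun (N := N) (p + q) = fun g => Efun p g + Efun q g := by
        funext g; simp [Efun]
      have h2 : dE (N := N) (p + q) g = dE p g + dE q g := by
        ext w
        simp only [dE, ContinuousLinearMap.add_apply, ContinuousLinearMap.smul_apply,
          ContinuousLinearMap.coe_sum', Finset.sum_apply, coordCLM_apply, smul_eq_mul,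
          map_add, Efun]
        rw [← Finset.sum_add_distrib]
        refine Finset.sum_congr rfl (fun t _ => ?_)
        simp [Efun, add_mul]
      rw [h1, h2]
      exact hp.add hq
  | mul_X p s hp =>
      have hc : HasFDerivAt (fun g : Fin N → Fin N → ℂ => g s.1 s.2) (coordCLM s) g :=
        (coordCLM s).hasFDerivAt
      have h1 : Efun (N := N) (p * X s) = fun g => Efun p g * g s.1 s.2 := by
        funext g; simp [Efun]
      have key := hp.mul hc
      rw [h1]
      have h2 : dE (p * X s) g = Efun p g • coordCLM s + g s.1 s.2 • dE p g := by
        ext w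
        have hterm : ∀ t ∈ (Finset.univ : Finset (Fin N × Fin N)),
            Efun ((pderiv t) (p * X s)) g * w t.1 t.2
              = (if s = t then Efun p g * w s.1 s.2 else 0)
                + g s.1 s.2 * (Efun ((pderiv t) p) g * w t.1 t.2) := by
          intro t _
          rw [show (pderiv t) (p * X s) = pderiv t p * X s + p * pderiv t (X s) from pderiv_mul,
            pderiv_X]
          by_cases h : s = t
          · subst h; simp [Efun]; ring
          · simp [Efun, h, Pi.single_apply]; ring
        simp only [dE, ContinuousLinearMap.add_apply, ContinuousLinearMap.smul_apply,
          ContinuousLinearMap.coe_sum', Finset.sum_apply, coordCLM_apply, smul_eq_mul]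
        rw [Finset.sum_congr rfl hterm, Finset.sum_add_distrib, Finset.sum_ite_eq]
        simp [Finset.mul_sum]
      rw [h2]
      exact key

lemma Lder_Efun (X : Fin N → Fin N → ℂ) (p : PA N) :
    Lder X (Efun p) = Efun (Dn (Matrix.of X) p) := by
  funext g
  have h := (hasFDerivAt_Efun p g).fderiv
  show fderiv ℂ (Efun p) g _ = _
  rw [h]
  rw [show Efun (Dn (Matrix.of X) p) g
      = ∑ s : Fin N × Fin N, (∑ m, g s.1 m * X m s.2) * Efun (pderiv s p) g from ?_]
  · simp only [dE, ContinuousLinearMap.coe_sum', Finset.sum_apply,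
      ContinuousLinearMap.smul_apply, coordCLM_apply, smul_eq_mul]
    refine Finset.sum_congr rfl (fun s _ => ?_)
    have : (Matrix.of.symm (Matrix.of g * Matrix.of X)) s.1 s.2 = ∑ m, g s.1 m * X m s.2 := by
      simp [Matrix.mul_apply]
    rw [this]
    ring
  · rw [Dn_eq_sum_pderiv, deriv_sum_apply]
    simp only [Efun, Derivation.smul_apply, smul_eq_mul, map_sum, map_mul, eval_X, eval_C]
    refine Finset.sum_congr rfl (fun s _ => ?_)
    simp

lemma LderList_Efun (l : List (Fin N → Fin N → ℂ)) (p : PA N) :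
    LderList l (Efun p) = Efun (DnList (l.map Matrix.of) p) := by
  induction l with
  | nil => rfl
  | cons X l ih =>
      show Lder X (LderList l (Efun p)) = _
      rw [ih]
      exact Lder_Efun X _

/-! ### Engel's theorem: products of sufficiently many elements of `n` vanish -/

lemma engel_prod (n : LieSubalgebra ℂ (Matrix (Fin N) (Fin N) ℂ))
    (hn : ∀ X ∈ n, IsNilpotent X) :
    ∃ k : ℕ, 0 < k ∧ ∀ l : List (Matrix (Fin N) (Fin N) ℂ),
      k ≤ l.length → (∀ X ∈ l, X ∈ n) → l.prod = 0 := by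
  classical
  set φ : Matrix (Fin N) (Fin N) ℂ →ₐ[ℂ] Module.End ℂ (Fin N → ℂ) :=
    Matrix.toLinAlgEquiv'.toAlgHom with hφ
  let n' : LieSubalgebra ℂ (Module.End ℂ (Fin N → ℂ)) := n.map φ.toLieHom
  have hnil : ∀ x : n', IsNilpotent (LieModule.toEnd ℂ n' (Fin N → ℂ) x) := by
    intro x
    have hx : IsNilpotent (x : Module.End ℂ (Fin N → ℂ)) := by
      obtain ⟨X, hX, hval⟩ := x.2
      rw [← hval]
      exact (hn X hX).map φ
    have heq : LieModule.toEnd ℂ n' (Fin N → ℂ) x = (x : Module.End ℂ (Fin N → ℂ)) := by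
      ext w; rfl
    rw [heq]
    exact hx
  have hEngel := LieAlgebra.isEngelian_of_isNoetherian (R := ℂ) (L := n') (Fin N → ℂ) hnil
  obtain ⟨k, hk⟩ := (LieModule.isNilpotent_iff ℂ n' (Fin N → ℂ)).mp hEngel
  refine ⟨k + 1, Nat.succ_pos _, ?_⟩
  have key : ∀ (l : List (Matrix (Fin N) (Fin N) ℂ)), (∀ X ∈ l, X ∈ n) →
      ∀ v : Fin N → ℂ,
        l.prod.mulVec v ∈ LieModule.lowerCentralSeries ℂ n' (Fin N → ℂ) l.length := by
    intro l
    induction l with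
    | nil => intro _ v; simp [LieModule.lowerCentralSeries]
    | cons X l ih =>
        intro hmem v
        have hXn : φ X ∈ n' := ⟨X, hmem X List.mem_cons_self, rfl⟩
        have hv := ih (fun Y hY => hmem Y (List.mem_cons_of_mem X hY)) v
        have : (X :: l).prod.mulVec v = ⁅(⟨φ X, hXn⟩ : n'), l.prod.mulVec v⁆ := by
          show _ = φ X (l.prod.mulVec v)
          rw [List.prod_cons, ← Matrix.mulVec_mulVec]
          rfl
        rw [this, List.length_cons]
        rw [LieModule.lowerCentralSeries_succ]
        exact LieSubmodule.lie_mem_lie (LieSubmodule.mem_top _) hv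
  intro l hlen hmem
  have h0 : (l.take (k+1)).prod = 0 := by
    have hlen' : (l.take (k+1)).length = k + 1 := by
      rw [List.length_take]; omega
    have hv : ∀ v, (l.take (k+1)).prod.mulVec v = 0 := by
      intro v
      have := key (l.take (k+1)) (fun Y hY => hmem Y (List.mem_of_mem_take hY)) v
      rw [hlen'] at this
      have hle : LieModule.lowerCentralSeries ℂ n' (Fin N → ℂ) (k+1) ≤
          LieModule.lowerCentralSeries ℂ n' (Fin N → ℂ) k :=
        LieModule.antitone_lowerCentralSeries ℂ n' (Fin N → ℂ) (Nat.le_succ k)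
      rw [hk] at hle
      simpa using hle this
    apply Matrix.toLinAlgEquiv'.injective
    rw [map_zero]
    apply LinearMap.ext
    intro v
    rw [Matrix.toLinAlgEquiv'_apply, hv v, LinearMap.zero_apply]
  calc l.prod = (l.take (k+1)).prod * (l.drop (k+1)).prod := by
        rw [← List.prod_append, List.take_append_drop]
    _ = 0 := by rw [h0, zero_mul]

/-! ### The main induction -/

lemma DnList_C_cons (a : Matrix (Fin N) (Fin N) ℂ) (l : List (Matrix (Fin N) (Fin N) ℂ)) (c : ℂ) :
    DnList (a :: l) (C c) = 0 := by
  induction l generalizing a with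
  | nil => exact MvPolynomial.derivation_C _ _
  | cons b l ih => rw [DnList_cons, DnList_cons, ← DnList_cons b l, ih b, map_zero]

lemma DnList_monomial (n : LieSubalgebra ℂ (Matrix (Fin N) (Fin N) ℂ)) (k : ℕ)
    (hprod : ∀ l : List (Matrix (Fin N) (Fin N) ℂ),
      k ≤ l.length → (∀ X ∈ l, X ∈ n) → l.prod = 0) :
    ∀ (e : ℕ) (m : (Fin N × Fin N) →₀ ℕ) (c : ℂ), (m.sum fun _ x => x) ≤ e →
    ∀ l : List (Matrix (Fin N) (Fin N) ℂ), (∀ X ∈ l, X ∈ n) → k * e < l.length →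
      DnList l (monomial m c) = 0 := by
  intro e
  induction e with
  | zero =>
      intro m c he l hmem hlen
      have hm0 : m = 0 := by
        ext a
        by_contra ha
        have hmemsup : a ∈ m.support := Finsupp.mem_support_iff.mpr ha
        have h1 : m a ≤ ∑ x ∈ m.support, m x :=
          Finset.single_le_sum (fun i _ => Nat.zero_le (m i)) hmemsup
        simp only [Finsupp.sum] at he
        simp only [Finsupp.coe_zero, Pi.zero_apply] at ha
        omega
      subst hm0
      match l, hlen with
      | a :: l, _ =>
        rw [show (monomial (0 : (Fin N × Fin N) →₀ ℕ) c) = C c from rfl]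
        exact DnList_C_cons a l c
  | succ e ih =>
      intro m c he l hmem hlen
      by_cases hm0 : m = 0
      · subst hm0
        match l, hlen with
        | a :: l, _ =>
          rw [show (monomial (0 : (Fin N × Fin N) →₀ ℕ) c) = C c from rfl]
          exact DnList_C_cons a l c
      · obtain ⟨s, hs⟩ := Finsupp.support_nonempty_iff.mpr hm0
        have hms : 1 ≤ m s := Nat.one_le_iff_ne_zero.mpr (Finsupp.mem_support_iff.mp hs)
        set m' := m - Finsupp.single s 1 with hm'
        have hsum : m = m' + Finsupp.single s 1 := by
          ext a
          simp only [Finsupp.add_apply, Finsupp.tsub_apply, Finsupp.single_apply, hm']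
          by_cases h : s = a
          · subst h; simp only [eq_self_iff_true, if_true]; omega
          · simp [h]
        have hmon : monomial m c = monomial m' c * MvPolynomial.X s := by
          rw [MvPolynomial.X, monomial_mul, mul_one, ← hsum]
        have he' : (m'.sum fun _ x => x) ≤ e := by
          have : (m.sum fun _ x => x) = (m'.sum fun _ x => x) + 1 := by
            rw [hsum, Finsupp.sum_add_index (by simp) (by intros; rfl)]
            simp
          omega
        rw [hmon, DnList_mul]
        apply List.sum_eq_zero
        intro x hx
        obtain ⟨r, hr, rfl⟩ := List.mem_map.mp hx
        obtain ⟨hlen', hmem1, hmem2⟩ := splittings_spec l r hr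
        by_cases h2 : k ≤ r.2.length
        · have : r.2.prod = 0 := hprod r.2 h2 (fun X hX => hmem X (hmem2 X hX))
          rw [DnList_X, this]
          have : matC (0 : Matrix (Fin N) (Fin N) ℂ) = 0 := by
            simp [matC]
          rw [this, mul_zero]
          simp [Matrix.zero_apply]
        · have : k * e < r.1.length := by
            push_neg at h2
            rw [Nat.mul_succ] at hlen
            omega
          rw [ih m' c he' r.1 (fun X hX => hmem X (hmem1 X hX)) this, zero_mul]

lemma DnList_poly_vanish (n : LieSubalgebra ℂ (Matrix (Fin N) (Fin N) ℂ)) (k : ℕ)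
    (hprod : ∀ l : List (Matrix (Fin N) (Fin N) ℂ),
      k ≤ l.length → (∀ X ∈ l, X ∈ n) → l.prod = 0)
    (p : PA N) (l : List (Matrix (Fin N) (Fin N) ℂ)) (hmem : ∀ X ∈ l, X ∈ n)
    (hlen : k * p.totalDegree < l.length) : DnList l p = 0 := by
  conv_lhs => rw [← support_sum_monomial_coeff p]
  rw [DnList_sum]
  apply Finset.sum_eq_zero
  intro m hm
  exact DnList_monomial n k hprod p.totalDegree m _ (le_totalDegree hm) l hmem hlen

end Stmt16Aux

open Stmt16Aux in
/-- Let `𝔫` be a Lie subalgebra of `gl_N(ℂ)` all of whose elements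
are nilpotent matrices.  Then for every polynomial function `p` on `ℂ^{N×N}` there
exists `N_p ∈ ℕ` such that for every `M > N_p` and all `X_1,…,X_M ∈ 𝔫` the iterated
left-invariant derivative `X_1^L(X_2^L(⋯(X_M^L p)⋯))` vanishes identically. -/
theorem stmt16 {N : ℕ}
    (n : LieSubalgebra ℂ (Matrix (Fin N) (Fin N) ℂ))
    (hn : ∀ X ∈ n, IsNilpotent X)
    (p : MvPolynomial (Fin N × Fin N) ℂ) :
    ∃ Np : ℕ, ∀ M : ℕ, Np < M → ∀ l : List (Fin N → Fin N → ℂ),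
      l.length = M → (∀ X ∈ l, Matrix.of X ∈ n) →
      LderList l (fun g => MvPolynomial.eval (fun ij => g ij.1 ij.2) p) = 0 := by
  obtain ⟨k, hkpos, hprod⟩ := engel_prod n hn
  refine ⟨k * p.totalDegree, ?_⟩
  intro M hM l hlenM hmeml
  have hDn : DnList (l.map Matrix.of) p = 0 := by
    apply DnList_poly_vanish n k hprod p
    · intro X hX
      obtain ⟨Y, hY, rfl⟩ := List.mem_map.mp hX
      exact hmeml Y hY
    · rw [List.length_map, hlenM]
      exact hM
  have h1 : LderList l (Efun p) = Efun (DnList (l.map Matrix.of) p) := LderList_Efun l p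
  rw [show (fun g => MvPolynomial.eval (fun ij => g ij.1 ij.2) p) = Efun p from rfl, h1, hDn]
  funext g
  simp [Efun]
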